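/- arXiv:1205.2152 — 3 statements merged into one kernel-verified Lean document; each statement's English description precedes it below -/
import Mathlib

section
/- Let G = (P, W) be a simple game with dual game G* = (P, {X ⊆ P : P \ X ∉ W}). Then G is roughly weighted if and only if G* is roughly weighted. -/
/-- A simple game `W` on the finite player set `ι` is roughly weighted if there exist
nonnegative weights and a quota, not all zero, such that coalitions strictly below the
quota are losing and coalitions strictly above the quota are winning. -/
def RoughlyWeighted {ι : Type*} [Fintype ι] (W : Set (Finset ι)) : Prop :=
  ∃ (w : ι → ℝ) (q : ℝ), (∀ i, 0 ≤ w i) ∧ ¬(q = 0 ∧ ∀ i, w i = 0) ∧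
    ∀ X : Finset ι, ((∑ i ∈ X, w i) < q → X ∉ W) ∧ (q < (∑ i ∈ X, w i) → X ∈ W)

lemma rw_dual {ι : Type*} [Fintype ι] [DecidableEq ι] (W : Set (Finset ι)) :
    RoughlyWeighted W → RoughlyWeighted {X : Finset ι | Xᶜ ∉ W} := by
  rintro ⟨w, q, hw, hnt, h⟩
  refine ⟨w, (∑ i, w i) - q, hw, ?_, ?_⟩
  · rintro ⟨hq, hw0⟩
    apply hnt
    have hT : (∑ i, w i) = 0 := by simp [hw0]
    constructor
    · linarith
    · exact hw0
  · intro X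
    have hsplit : (∑ i ∈ X, w i) + (∑ i ∈ Xᶜ, w i) = ∑ i, w i := by
      rw [Finset.sum_add_sum_compl]
    constructor
    · intro hlt hX
      have : q < ∑ i ∈ Xᶜ, w i := by linarith
      exact hX ((h Xᶜ).2 this)
    · intro hgt
      have : (∑ i ∈ Xᶜ, w i) < q := by linarith
      exact (h Xᶜ).1 this

theorem stmt_10 {ι : Type*} [Fintype ι] [DecidableEq ι] (W : Set (Finset ι))
    (hmono : ∀ X Y : Finset ι, X ∈ W → X ⊆ Y → Y ∈ W) :
    RoughlyWeighted W ↔ RoughlyWeighted {X : Finset ι | Xᶜ ∉ W} := by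
  constructor
  · exact rw_dual W
  · intro h
    have := rw_dual {X : Finset ι | Xᶜ ∉ W} h
    have heq : {X : Finset ι | Xᶜ ∉ {X : Finset ι | Xᶜ ∉ W}} = W := by
      ext X
      simp [not_not]
    rwa [heq] at this
end

section
/- Let G = (P, W) be a roughly weighted simple game with rough voting representation [q; w], and let A ⊆ P. Then the reduced game G^A on P \ A, whose winning coalitions are {X ⊆ P \ A : X ∪ A ∈ W}, is roughly weighted with representation [max(0, q - w(A)); w restricted to P \ A], provided some player in P \ A has positive weight. -/
theorem stmt_12 {ι : Type*} [Fintype ι] [DecidableEq ι] (W : Set (Finset ι))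
    (hmono : ∀ X Y : Finset ι, X ∈ W → X ⊆ Y → Y ∈ W)
    (w : ι → ℝ) (q : ℝ) (hw : ∀ i, 0 ≤ w i)
    (hnz : ¬(q = 0 ∧ ∀ i, w i = 0))
    (hrep : ∀ X : Finset ι, ((∑ i ∈ X, w i) < q → X ∉ W) ∧ (q < (∑ i ∈ X, w i) → X ∈ W))
    (A : Finset ι) (hb : ∃ b ∈ Aᶜ, 0 < w b) :
    ¬(max 0 (q - ∑ i ∈ A, w i) = 0 ∧ ∀ i ∈ Aᶜ, w i = 0) ∧
    ∀ X : Finset ι, X ⊆ Aᶜ →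
      (((∑ i ∈ X, w i) < max 0 (q - ∑ i ∈ A, w i) →
          X ∉ {Y : Finset ι | Y ⊆ Aᶜ ∧ Y ∪ A ∈ W}) ∧
       (max 0 (q - ∑ i ∈ A, w i) < (∑ i ∈ X, w i) →
          X ∈ {Y : Finset ι | Y ⊆ Aᶜ ∧ Y ∪ A ∈ W})) := by
  obtain ⟨b, hbA, hbpos⟩ := hb
  constructor
  · rintro ⟨-, h⟩
    exact absurd (h b hbA) (ne_of_gt hbpos)
  · intro X hX
    have hdisj : Disjoint X A := by
      rw [Finset.disjoint_left]
      intro a ha haA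
      exact (Finset.mem_compl.mp (hX ha)) haA
    have hsum : ∑ i ∈ X ∪ A, w i = ∑ i ∈ X, w i + ∑ i ∈ A, w i :=
      Finset.sum_union hdisj
    constructor
    · intro hlt hmem
      have h0 : (0:ℝ) ≤ ∑ i ∈ X, w i := Finset.sum_nonneg fun i _ => hw i
      have hpos : (0:ℝ) < max 0 (q - ∑ i ∈ A, w i) := lt_of_le_of_lt h0 hlt
      have heq : max 0 (q - ∑ i ∈ A, w i) = q - ∑ i ∈ A, w i := by
        rcases max_cases (0:ℝ) (q - ∑ i ∈ A, w i) with ⟨h1, h2⟩ | ⟨h1, h2⟩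
        · exact absurd (h1 ▸ hpos) (lt_irrefl 0)
        · exact h1
      rw [heq] at hlt
      have : ∑ i ∈ X ∪ A, w i < q := by rw [hsum]; linarith
      exact (hrep (X ∪ A)).1 this hmem.2
    · intro hlt
      refine ⟨hX, (hrep (X ∪ A)).2 ?_⟩
      have hle : q - ∑ i ∈ A, w i ≤ max 0 (q - ∑ i ∈ A, w i) := le_max_right _ _
      rw [hsum]; linarith
end

section
/- Let G = (P, W) be a roughly weighted simple game with rough voting representation [q; w]. Define a new weight function u by u(i) = (1/|[i]|)·Σ_{j∈[i]} w(j), where [i] is the equivalence class of player i under the relation i ∼ j iff for all X ⊆ P with i,j ∉ X, X ∪ {i} ∈ W ⟺ X ∪ {j} ∈ W. Then [q; u] is also a rough voting representation of G, and u is constant on each equivalence class. -/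
open scoped Classical

lemma aux_min13 {ι : Type*} [DecidableEq ι] (w : ι → ℝ) (c : Finset ι) (n : ℕ)
    (hn : n ≤ c.card) :
    ∃ S ⊆ c, S.card = n ∧ (c.card : ℝ) * ∑ i ∈ S, w i ≤ (n : ℝ) * ∑ i ∈ c, w i := by
  obtain ⟨S0, hS0sub, hS0card⟩ := Finset.exists_subset_card_eq hn
  have hne : (Finset.powersetCard n c).Nonempty :=
    ⟨S0, (Finset.mem_powersetCard).2 ⟨hS0sub, hS0card⟩⟩
  obtain ⟨S, hSmem, hSmin⟩ := Finset.exists_min_image _ (fun S => ∑ i ∈ S, w i) hne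
  obtain ⟨hSsub, hScard⟩ := Finset.mem_powersetCard.1 hSmem
  refine ⟨S, hSsub, hScard, ?_⟩
  have hkey : ∀ s ∈ S, ∀ t ∈ c \ S, w s ≤ w t := by
    intro s hs t ht
    have htS : t ∉ S := (Finset.mem_sdiff.1 ht).2
    have htc : t ∈ c := (Finset.mem_sdiff.1 ht).1
    have hmem' : insert t (S.erase s) ∈ Finset.powersetCard n c := by
      refine Finset.mem_powersetCard.2 ⟨?_, ?_⟩
      · intro a ha
        rcases Finset.mem_insert.1 ha with h | h
        · exact h ▸ htc
        · exact hSsub (Finset.mem_of_mem_erase h)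
      · rw [Finset.card_insert_of_notMem (fun h => htS (Finset.mem_of_mem_erase h)),
          Finset.card_erase_of_mem hs, hScard]
        exact Nat.succ_pred_eq_of_pos (hScard ▸ Finset.card_pos.2 ⟨s, hs⟩)
    have := hSmin _ hmem'
    rw [Finset.sum_insert (fun h => htS (Finset.mem_of_mem_erase h)),
      Finset.sum_erase_eq_sub hs] at this
    linarith
  have hdouble : ∑ s ∈ S, ∑ t ∈ c \ S, w s ≤ ∑ s ∈ S, ∑ t ∈ c \ S, w t := by
    refine Finset.sum_le_sum fun s hs => Finset.sum_le_sum fun t ht => hkey s hs t ht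
  have h1 : ∑ s ∈ S, ∑ t ∈ c \ S, w s = ((c \ S).card : ℝ) * ∑ s ∈ S, w s := by
    simp [Finset.sum_const, Finset.sum_mul, mul_comm]
  have h2 : ∑ s ∈ S, ∑ t ∈ c \ S, w t = (n : ℝ) * ∑ t ∈ c \ S, w t := by
    rw [Finset.sum_const, hScard]; simp
  have hcard : (c \ S).card + n = c.card := by
    rw [← hScard]; exact Finset.card_sdiff_add_card_eq_card hSsub
  have hsplit : ∑ t ∈ c \ S, w t + ∑ s ∈ S, w s = ∑ i ∈ c, w i :=
    Finset.sum_sdiff hSsub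
  have hcR : ((c \ S).card : ℝ) = (c.card : ℝ) - n := by
    have := hcard; push_cast [← this]; ring
  rw [h1, h2, hcR] at hdouble
  nlinarith [hdouble, hsplit]

lemma aux_max13 {ι : Type*} [DecidableEq ι] (w : ι → ℝ) (c : Finset ι) (n : ℕ)
    (hn : n ≤ c.card) :
    ∃ S ⊆ c, S.card = n ∧ (n : ℝ) * ∑ i ∈ c, w i ≤ (c.card : ℝ) * ∑ i ∈ S, w i := by
  obtain ⟨S, h1, h2, h3⟩ := aux_min13 (fun i => -w i) c n hn
  simp only [Finset.sum_neg_distrib, mul_neg] at h3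
  exact ⟨S, h1, h2, by linarith⟩

theorem stmt_13 {ι : Type*} [Fintype ι] [DecidableEq ι] (W : Set (Finset ι))
    (hmono : ∀ X Y : Finset ι, X ∈ W → X ⊆ Y → Y ∈ W)
    (w : ι → ℝ) (q : ℝ) (hw : ∀ i, 0 ≤ w i)
    (hnz : ¬(q = 0 ∧ ∀ i, w i = 0))
    (hrep : ∀ X : Finset ι, ((∑ i ∈ X, w i) < q → X ∉ W) ∧ (q < (∑ i ∈ X, w i) → X ∈ W))
    (r : ι → ι → Prop)
    (hr : ∀ i j, r i j ↔ ∀ X : Finset ι, i ∉ X → j ∉ X → (insert i X ∈ W ↔ insert j X ∈ W))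
    (cls : ι → Finset ι) (hcls : ∀ i, cls i = Finset.univ.filter (fun j => r i j))
    (u : ι → ℝ) (hu : ∀ i, u i = (∑ j ∈ cls i, w j) / (cls i).card) :
    (∀ i, 0 ≤ u i) ∧ ¬(q = 0 ∧ ∀ i, u i = 0) ∧
    (∀ X : Finset ι, ((∑ i ∈ X, u i) < q → X ∉ W) ∧ (q < (∑ i ∈ X, u i) → X ∈ W)) ∧
    (∀ i j, r i j → u i = u j) := by
  have hrefl : ∀ i, r i i := fun i => (hr i i).2 (fun X _ _ => Iff.rfl)
  have hsymm : ∀ {i j}, r i j → r j i := by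
    intro i j h; rw [hr] at h ⊢; intro X hj hi; exact (h X hi hj).symm
  have htrans : ∀ {i j k}, r i j → r j k → r i k := by
    intro i j k hij hjk
    rw [hr] at hij hjk ⊢
    intro X hiX hkX
    by_cases hjX : j ∈ X
    · by_cases hik : i = k
      · rw [hik]
      · set Z := X.erase j with hZ
        have hjZ : j ∉ Z := Finset.notMem_erase j X
        have hiZ : i ∉ Z := fun h => hiX (Finset.mem_of_mem_erase h)
        have hkZ : k ∉ Z := fun h => hkX (Finset.mem_of_mem_erase h)
        have hij' : i ≠ j := fun h => hiX (h ▸ hjX)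
        have hkj' : k ≠ j := fun h => hkX (h ▸ hjX)
        have hX : X = insert j Z := (Finset.insert_erase hjX).symm
        have hjiZ : j ∉ insert i Z := by
          simp [Finset.mem_insert, hjZ, Ne.symm hij']
        have hkiZ : k ∉ insert i Z := by
          simp only [Finset.mem_insert]
          rintro (h | h)
          exacts [hik h.symm, hkZ h]
        have hikZ : i ∉ insert k Z := by
          simp [Finset.mem_insert, hiZ, hik]
        have hjkZ : j ∉ insert k Z := by
          simp [Finset.mem_insert, hjZ, Ne.symm hkj']
        have step1 := hjk (insert i Z) hjiZ hkiZ
        have step2 := hij (insert k Z) hikZ hjkZ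
        calc insert i X ∈ W ↔ insert j (insert i Z) ∈ W := by
              rw [hX, Finset.insert_comm]
          _ ↔ insert k (insert i Z) ∈ W := step1
          _ ↔ insert i (insert k Z) ∈ W := by rw [Finset.insert_comm]
          _ ↔ insert j (insert k Z) ∈ W := step2
          _ ↔ insert k X ∈ W := by rw [hX, Finset.insert_comm]
    · exact (hij X hiX hjX).trans (hjk X hjX hkX)
  have mem_cls : ∀ i j, j ∈ cls i ↔ r i j := by
    intro i j; rw [hcls]; simp
  have self_mem : ∀ i, i ∈ cls i := fun i => (mem_cls i i).2 (hrefl i)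
  have cls_eq : ∀ {i j}, r i j → cls i = cls j := by
    intro i j h; ext a; rw [mem_cls, mem_cls]
    exact ⟨fun h' => htrans (hsymm h) h', fun h' => htrans h h'⟩
  have cls_card_pos : ∀ i, 0 < (cls i).card := fun i => Finset.card_pos.2 ⟨i, self_mem i⟩
  have swap : ∀ {i j} (X : Finset ι), r i j → i ∈ X → j ∉ X →
      (X ∈ W ↔ insert j (X.erase i) ∈ W) := by
    intro i j X hij hiX hjX
    have h := (hr i j).1 hij (X.erase i) (Finset.notMem_erase i X)
      (fun h => hjX (Finset.mem_of_mem_erase h))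
    rw [Finset.insert_erase hiX] at h
    exact h
  have L2 : ∀ n (X Y : Finset ι), (X \ Y).card = n →
      (∀ i, (X ∩ cls i).card = (Y ∩ cls i).card) → (X ∈ W ↔ Y ∈ W) := by
    intro n
    induction n with
    | zero =>
      intro X Y hc hcount
      have hXY : X ⊆ Y := by
        rw [← Finset.sdiff_eq_empty_iff_subset]
        exact Finset.card_eq_zero.1 hc
      have hYX : Y ⊆ X := by
        intro j hj
        have hsub : X ∩ cls j ⊆ Y ∩ cls j :=
          Finset.inter_subset_inter hXY (Finset.Subset.refl _)
        have heq : X ∩ cls j = Y ∩ cls j :=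
          Finset.eq_of_subset_of_card_le hsub (le_of_eq (hcount j).symm)
        have hmem : j ∈ X ∩ cls j := by
          rw [heq]; exact Finset.mem_inter.2 ⟨hj, self_mem j⟩
        exact (Finset.mem_inter.1 hmem).1
      rw [Finset.Subset.antisymm hXY hYX]
    | succ n ih =>
      intro X Y hc hcount
      have hne : (X \ Y).Nonempty := Finset.card_pos.1 (by omega)
      obtain ⟨i, hi⟩ := hne
      have hiX : i ∈ X := (Finset.mem_sdiff.1 hi).1
      have hiY : i ∉ Y := (Finset.mem_sdiff.1 hi).2
      have hnotsub : ¬ (Y ∩ cls i ⊆ X ∩ cls i) := by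
        intro hsub
        have heq : Y ∩ cls i = X ∩ cls i :=
          Finset.eq_of_subset_of_card_le hsub (le_of_eq (hcount i))
        have hmem : i ∈ Y ∩ cls i := by
          rw [heq]; exact Finset.mem_inter.2 ⟨hiX, self_mem i⟩
        exact hiY (Finset.mem_inter.1 hmem).1
      obtain ⟨j, hjY', hjX'⟩ := Finset.not_subset.1 hnotsub
      have hjcls : j ∈ cls i := (Finset.mem_inter.1 hjY').2
      have hjY : j ∈ Y := (Finset.mem_inter.1 hjY').1
      have hjX : j ∉ X := fun h => hjX' (Finset.mem_inter.2 ⟨h, hjcls⟩)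
      have hrij : r i j := (mem_cls i j).1 hjcls
      have hW1 : X ∈ W ↔ insert j (X.erase i) ∈ W := swap X hrij hiX hjX
      have hclsj : cls j = cls i := (cls_eq hrij).symm
      have hcount1 : ∀ k, ((insert j (X.erase i)) ∩ cls k).card = (X ∩ cls k).card := by
        intro k
        by_cases hjk : j ∈ cls k
        · have hck : cls k = cls i := by
            rw [cls_eq ((mem_cls k j).1 hjk), hclsj]
          have hik : i ∈ cls k := by rw [hck]; exact self_mem i
          have hiXk : i ∈ X ∩ cls k := Finset.mem_inter.2 ⟨hiX, hik⟩
          have e : (insert j (X.erase i)) ∩ cls k = insert j ((X ∩ cls k).erase i) := by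
            ext a
            simp only [Finset.mem_inter, Finset.mem_insert, Finset.mem_erase]
            constructor
            · rintro ⟨h1, h2⟩
              rcases h1 with h | ⟨hne', hX'⟩
              · exact Or.inl h
              · exact Or.inr ⟨hne', hX', h2⟩
            · rintro (h | ⟨hne', hX', h2⟩)
              · exact ⟨Or.inl h, h ▸ hjk⟩
              · exact ⟨Or.inr ⟨hne', hX'⟩, h2⟩
          rw [e, Finset.card_insert_of_notMem
            (fun h => hjX (Finset.mem_inter.1 (Finset.mem_of_mem_erase h)).1),
            Finset.card_erase_of_mem hiXk]
          exact Nat.succ_pred_eq_of_pos (Finset.card_pos.2 ⟨i, hiXk⟩)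
        · have hik : i ∉ cls k := by
            intro h
            have hcki : cls k = cls i := cls_eq ((mem_cls k i).1 h)
            exact hjk (hcki ▸ hjcls)
          have e : (insert j (X.erase i)) ∩ cls k = X ∩ cls k := by
            ext a
            simp only [Finset.mem_inter, Finset.mem_insert, Finset.mem_erase]
            constructor
            · rintro ⟨h1, h2⟩
              rcases h1 with h | ⟨_, hX'⟩
              · exact absurd (h ▸ h2) hjk
              · exact ⟨hX', h2⟩
            · rintro ⟨h1, h2⟩
              exact ⟨Or.inr ⟨fun he => hik (he ▸ h2), h1⟩, h2⟩
          rw [e]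
      have hsd : ((insert j (X.erase i)) \ Y).card = n := by
        have e : (insert j (X.erase i)) \ Y = (X \ Y).erase i := by
          ext a
          simp only [Finset.mem_sdiff, Finset.mem_insert, Finset.mem_erase]
          constructor
          · rintro ⟨h1, h2⟩
            rcases h1 with h | ⟨hne', hX'⟩
            · exact absurd (h ▸ hjY) h2
            · exact ⟨hne', hX', h2⟩
          · rintro ⟨hne', hX', hY'⟩
            exact ⟨Or.inr ⟨hne', hX'⟩, hY'⟩
        rw [e, Finset.card_erase_of_mem hi, hc]; omega
      exact hW1.trans (ih (insert j (X.erase i)) Y hsd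
        (fun k => (hcount1 k).trans (hcount k)))
  refine ⟨?_, ?_, ?_, ?_⟩
  · intro i; rw [hu]
    exact div_nonneg (Finset.sum_nonneg fun j _ => hw j) (Nat.cast_nonneg _)
  · rintro ⟨hq, hu0⟩
    apply hnz
    refine ⟨hq, fun i => ?_⟩
    have h0 := hu0 i
    rw [hu] at h0
    have hcard : ((cls i).card : ℝ) ≠ 0 := ne_of_gt (by exact_mod_cast cls_card_pos i)
    have hsum : ∑ j ∈ cls i, w j = 0 := by
      rcases div_eq_zero_iff.1 h0 with h | h
      · exact h
      · exact absurd h hcard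
    exact (Finset.sum_eq_zero_iff_of_nonneg (fun j _ => hw j)).1 hsum i (self_mem i)
  · intro X
    set C := X.image cls with hC
    have hmapsto : ∀ i ∈ X, cls i ∈ C := fun i hi => Finset.mem_image_of_mem cls hi
    have hfilter : ∀ c ∈ C, X.filter (fun i => cls i = c) = X ∩ c := by
      intro c hcC
      obtain ⟨k, hk, rfl⟩ := Finset.mem_image.1 hcC
      ext a
      simp only [Finset.mem_filter, Finset.mem_inter]
      constructor
      · rintro ⟨ha, he⟩; exact ⟨ha, he ▸ self_mem a⟩
      · rintro ⟨ha, hmem⟩; exact ⟨ha, (cls_eq ((mem_cls k a).1 hmem)).symm⟩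
    have hXu : ∑ i ∈ X, u i =
        ∑ c ∈ C, ((X ∩ c).card : ℝ) * ((∑ j ∈ c, w j) / (c.card : ℝ)) := by
      rw [← Finset.sum_fiberwise_of_maps_to hmapsto u]
      refine Finset.sum_congr rfl (fun c hcC => ?_)
      have e1 : ∀ i ∈ X.filter (fun i => cls i = c), u i = (∑ j ∈ c, w j) / (c.card : ℝ) := by
        intro i hi
        have he : cls i = c := (Finset.mem_filter.1 hi).2
        rw [hu, he]
      rw [Finset.sum_congr rfl e1, Finset.sum_const, hfilter c hcC, nsmul_eq_mul]
    have hcount_gen : ∀ (S : Finset ι → Finset ι), (∀ c, S c ⊆ c) →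
        (∀ c, (S c).card = (X ∩ c).card) →
        ∀ i, ((C.biUnion S) ∩ cls i).card = (X ∩ cls i).card := by
      intro S hsub hcard i
      by_cases hci : cls i ∈ C
      · have e : (C.biUnion S) ∩ cls i = S (cls i) := by
          ext a
          simp only [Finset.mem_inter, Finset.mem_biUnion]
          constructor
          · rintro ⟨⟨c, hcC, haS⟩, hacls⟩
            obtain ⟨k, hk, rfl⟩ := Finset.mem_image.1 hcC
            have hak : a ∈ cls k := hsub _ haS
            have he : cls k = cls i :=
              (cls_eq ((mem_cls k a).1 hak)).trans (cls_eq ((mem_cls i a).1 hacls)).symm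
            exact he ▸ haS
          · intro haS
            exact ⟨⟨cls i, hci, haS⟩, hsub _ haS⟩
        rw [e, hcard]
      · have e1 : X ∩ cls i = ∅ := by
          rw [Finset.eq_empty_iff_forall_notMem]
          intro a ha
          obtain ⟨haX, hacls⟩ := Finset.mem_inter.1 ha
          have he : cls a = cls i := (cls_eq ((mem_cls i a).1 hacls)).symm
          exact hci (he ▸ hmapsto a haX)
        have e2 : (C.biUnion S) ∩ cls i = ∅ := by
          rw [Finset.eq_empty_iff_forall_notMem]
          intro a ha
          obtain ⟨haU, hacls⟩ := Finset.mem_inter.1 ha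
          obtain ⟨c, hcC, haS⟩ := Finset.mem_biUnion.1 haU
          obtain ⟨k, hk, rfl⟩ := Finset.mem_image.1 hcC
          have hak : a ∈ cls k := hsub _ haS
          have he : cls k = cls i :=
            (cls_eq ((mem_cls k a).1 hak)).trans (cls_eq ((mem_cls i a).1 hacls)).symm
          exact hci (he ▸ hcC)
        rw [e1, e2]
    have hdisj : ∀ (S : Finset ι → Finset ι), (∀ c, S c ⊆ c) →
        ∑ a ∈ C.biUnion S, w a = ∑ c ∈ C, ∑ a ∈ S c, w a := by
      intro S hsub
      refine Finset.sum_biUnion ?_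
      intro c hcC c' hc'C hne'
      obtain ⟨k, hk, rfl⟩ := Finset.mem_image.1 hcC
      obtain ⟨k', hk', rfl⟩ := Finset.mem_image.1 hc'C
      refine Finset.disjoint_left.2 ?_
      intro a ha ha'
      have h1 : a ∈ cls k := hsub _ ha
      have h2 : a ∈ cls k' := hsub _ ha'
      exact hne' ((cls_eq ((mem_cls k a).1 h1)).trans (cls_eq ((mem_cls k' a).1 h2)).symm)
    have hexmin := fun c : Finset ι =>
      aux_min13 w c (X ∩ c).card (Finset.card_le_card Finset.inter_subset_right)
    choose Smin hminsub hmincard hminsum using hexmin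
    have hexmax := fun c : Finset ι =>
      aux_max13 w c (X ∩ c).card (Finset.card_le_card Finset.inter_subset_right)
    choose Smax hmaxsub hmaxcard hmaxsum using hexmax
    have hCpos : ∀ c ∈ C, (0:ℝ) < c.card := by
      intro c hcC; obtain ⟨k, hk, rfl⟩ := Finset.mem_image.1 hcC
      exact_mod_cast cls_card_pos k
    constructor
    · intro hlt
      have hYle : ∑ a ∈ C.biUnion Smin, w a ≤ ∑ i ∈ X, u i := by
        rw [hdisj Smin hminsub, hXu]
        refine Finset.sum_le_sum fun c hcC => ?_
        have hpos := hCpos c hcC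
        rw [← mul_div_assoc, le_div_iff₀ hpos, mul_comm]
        exact hminsum c
      have hYW := (hrep (C.biUnion Smin)).1 (lt_of_le_of_lt hYle hlt)
      have hiff := L2 ((C.biUnion Smin) \ X).card (C.biUnion Smin) X rfl
        (hcount_gen Smin hminsub hmincard)
      exact fun hXW => hYW (hiff.2 hXW)
    · intro hgt
      have hYge : ∑ i ∈ X, u i ≤ ∑ a ∈ C.biUnion Smax, w a := by
        rw [hdisj Smax hmaxsub, hXu]
        refine Finset.sum_le_sum fun c hcC => ?_
        have hpos := hCpos c hcC
        rw [← mul_div_assoc, div_le_iff₀ hpos]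
        exact (hmaxsum c).trans_eq (mul_comm _ _)
      have hYW := (hrep (C.biUnion Smax)).2 (lt_of_lt_of_le hgt hYge)
      have hiff := L2 ((C.biUnion Smax) \ X).card (C.biUnion Smax) X rfl
        (hcount_gen Smax hmaxsub hmaxcard)
      exact hiff.1 hYW
  · intro i j hij; rw [hu, hu, cls_eq hij]
end
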